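/- Let G be a finite graph and M a matching in G such that at most (ε/2)|V(G)| vertices of G are endpoints of augmenting paths for M of length shorter than T. Then the maximum matching M_G of G satisfies |M_G|/|V(G)| ≤ |M|/|V(G)| + 1/T + ε/2. -/

import Mathlib

/-- `M` is a matching of `G`: a set of edges of `G`, pairwise vertex-disjoint. -/
def IsMatchingSet {V : Type*} (G : SimpleGraph V) (M : Finset (Sym2 V)) : Prop :=
  (∀ e ∈ M, e ∈ G.edgeSet) ∧
  ∀ e ∈ M, ∀ f ∈ M, e ≠ f → ∀ v : V, ¬ (v ∈ e ∧ v ∈ f)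

/-- `v` is unmatched by `M`. -/
def Unmatched {V : Type*} (M : Finset (Sym2 V)) (v : V) : Prop :=
  ∀ e ∈ M, v ∉ e

/-- `w 0, w 1, …, w m` is an augmenting path of length `m` for the matching `M`:
a path in `G` with distinct vertices, alternating unmatched/matched edges, of odd
length, with unmatched endpoints. -/
def IsAugPath {V : Type*} (G : SimpleGraph V) (M : Finset (Sym2 V)) (m : ℕ)
    (w : ℕ → V) : Prop :=
  Odd m ∧ (∀ i ≤ m, ∀ j ≤ m, w i = w j → i = j) ∧
  (∀ i < m, G.Adj (w i) (w (i + 1))) ∧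
  (∀ i < m, (s(w i, w (i + 1)) ∈ M ↔ Odd i)) ∧
  Unmatched M (w 0) ∧ Unmatched M (w m)



section
variable {V : Type*}

def pwalk (f g : V → V) (v : V) : ℕ → V
  | 0 => v
  | (k+1) => (if Even k then g else f) (pwalk f g v k)

lemma pwalk_zero (f g : V → V) (v : V) : pwalk f g v 0 = v := rfl

lemma pwalk_succ (f g : V → V) (v : V) (k : ℕ) :
    pwalk f g v (k+1) = (if Even k then g else f) (pwalk f g v k) := rfl

lemma pwalk_succ_even (f g : V → V) (v : V) {k : ℕ} (hk : Even k) :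
    pwalk f g v (k+1) = g (pwalk f g v k) := by rw [pwalk_succ, if_pos hk]

lemma pwalk_succ_odd (f g : V → V) (v : V) {k : ℕ} (hk : Odd k) :
    pwalk f g v (k+1) = f (pwalk f g v k) := by
  rw [pwalk_succ, if_neg (Nat.not_even_iff_odd.mpr hk)]

lemma pwalk_one (f g : V → V) (v : V) : pwalk f g v 1 = g v := by
  rw [pwalk_succ_even f g v (Even.zero), pwalk_zero]

variable {f g : V → V} (hf : Function.Involutive f) (hg : Function.Involutive g)

include hf hg in
/-- injectivity until first stall -/
lemma pwalk_inj {v : V} (hfv : f v = v) :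
    ∀ k : ℕ, (∀ i < k, pwalk f g v (i+1) ≠ pwalk f g v i) →
      ∀ i ≤ k, ∀ j ≤ k, pwalk f g v i = pwalk f g v j → i = j := by
  intro k
  induction k with
  | zero => intro _ i hi j hj _; omega
  | succ k IH =>
    intro hns
    have IH' := IH (fun i hi => hns i (by omega))
    have key : ∀ i ≤ k, pwalk f g v i ≠ pwalk f g v (k+1) := by
      intro i hik heq
      rcases Nat.eq_zero_or_pos i with rfl | hi1
      · -- w (k+1) = v = w 0
        rw [pwalk_zero] at heq
        rcases Nat.even_or_odd k with hk | hk
        · rcases Nat.eq_zero_or_pos k with rfl | hk1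
          · exact hns 0 (by omega) (by rw [pwalk_zero]; exact heq.symm)
          · have h2 : v = g (pwalk f g v k) := heq.trans (pwalk_succ_even f g v hk)
            have h3 : pwalk f g v k = pwalk f g v 1 := by
              rw [pwalk_one]
              have := congrArg g h2
              rw [hg _] at this
              exact this.symm
            have hk2 : 2 ≤ k := by
              rcases hk with ⟨t, ht⟩; omega
            have := IH' k le_rfl 1 (by omega) h3
            omega
        · have hv : v = f (pwalk f g v k) := heq.trans (pwalk_succ_odd f g v hk)
          have h3 : pwalk f g v k = pwalk f g v 0 := by
            rw [pwalk_zero]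
            have := congrArg f hv
            rw [hf _, hfv] at this
            exact this.symm
          have hk1 : 1 ≤ k := hk.pos
          have := IH' k le_rfl 0 (by omega) h3
          omega
      · -- i ≥ 1
        by_cases hpar : (Even (i-1) ↔ Even k)
        · have hi : pwalk f g v i = (if Even k then g else f) (pwalk f g v (i-1)) := by
            have h := pwalk_succ f g v (i-1)
            rw [show (i-1)+1 = i by omega] at h
            rw [h]
            by_cases hc : Even k
            · rw [if_pos hc, if_pos (hpar.mpr hc)]
            · rw [if_neg hc, if_neg (fun hh => hc (hpar.mp hh))]
          have hσ : Function.Injective (if Even k then g else f) := by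
            by_cases hc : Even k
            · rw [if_pos hc]; exact hg.injective
            · rw [if_neg hc]; exact hf.injective
          have h3 : pwalk f g v (i-1) = pwalk f g v k := by
            apply hσ
            rw [← hi, ← pwalk_succ, ← heq]
          have := IH' (i-1) (by omega) k le_rfl h3
          omega
        · have hik' : i ≠ k := by
            intro h; subst h
            exact hns i (by omega) heq.symm
          have hparik : Even i ↔ Even k := by
            simp only [Nat.even_iff] at hpar ⊢
            omega
          have hi2 : pwalk f g v (i+1) = (if Even k then g else f) (pwalk f g v i) := by
            rw [pwalk_succ]
            by_cases hc : Even i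
            · rw [if_pos hc, if_pos (hparik.mp hc)]
            · rw [if_neg hc, if_neg (fun hh => hc (hparik.mpr hh))]
          have hσinv : ∀ x, (if Even k then g else f) ((if Even k then g else f) x) = x := by
            intro x; by_cases hc : Even k <;> simp [hc, hf x, hg x]
          have h3 : pwalk f g v (i+1) = pwalk f g v k := by
            rw [hi2, heq, pwalk_succ, hσinv]
          have := IH' (i+1) (by omega) k le_rfl h3
          simp only [Nat.even_iff] at hparik
          omega
    intro i hi j hj heq
    by_cases hik : i = k + 1
    · by_cases hjk : j = k + 1
      · omega
      · subst hik; exact absurd heq.symm (key j (by omega))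
    · by_cases hjk : j = k + 1
      · subst hjk; exact absurd heq (key i (by omega))
      · exact IH' i (by omega) j (by omega) heq
end

section
variable {V : Type*} {f g : V → V} (hf : Function.Involutive f) (hg : Function.Involutive g)

include hf hg in
lemma pwalk_exists_stall [Finite V] {v : V} (hfv : f v = v) :
    ∃ k, pwalk f g v (k+1) = pwalk f g v k := by
  by_contra hc
  push_neg at hc
  have hinj : Function.Injective (fun n => pwalk f g v n) := by
    intro i j hij
    exact pwalk_inj hf hg hfv (max i j) (fun l _ => hc l) i (le_max_left ..) j (le_max_right ..) hij
  obtain ⟨a, b, hab, h⟩ := Finite.exists_ne_map_eq_of_infinite (fun n => pwalk f g v n)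
  exact hab (hinj h)

/-- the stopping time of the walk -/
noncomputable def mstop (f g : V → V) (v : V) : ℕ :=
  sInf {k | pwalk f g v (k+1) = pwalk f g v k}

include hf hg in
lemma mstop_stall [Finite V] {v : V} (hfv : f v = v) :
    pwalk f g v (mstop f g v + 1) = pwalk f g v (mstop f g v) :=
  Nat.sInf_mem (pwalk_exists_stall hf hg hfv)

lemma mstop_min {v : V} {i : ℕ} (hi : i < mstop f g v) :
    pwalk f g v (i+1) ≠ pwalk f g v i :=
  Nat.notMem_of_lt_sInf hi

include hf hg in
lemma mstop_inj {v : V} (hfv : f v = v) :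
    ∀ i ≤ mstop f g v, ∀ j ≤ mstop f g v,
      pwalk f g v i = pwalk f g v j → i = j :=
  pwalk_inj hf hg hfv _ (fun i hi => mstop_min hi)

include hf hg in
lemma mstop_pos [Finite V] {v : V} (hfv : f v = v) (hgv : g v ≠ v) :
    1 ≤ mstop f g v := by
  rcases Nat.eq_zero_or_pos (mstop f g v) with h | h
  · exfalso
    have := mstop_stall hf hg hfv (g := g)
    rw [h, pwalk_one, pwalk_zero] at this
    exact hgv this
  · exact h

include hf hg in
/-- backward determinism -/
lemma pwalk_back {v1 v2 : V} :
    ∀ i j : ℕ, (Even i ↔ Even j) → i ≤ j → pwalk f g v1 i = pwalk f g v2 j →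
      v1 = pwalk f g v2 (j - i) := by
  intro i
  induction i generalizing v1 v2 with
  | zero => intro j _ _ h; simpa [pwalk_zero] using h
  | succ i IH =>
    intro j hpar hij heq
    obtain ⟨j', rfl⟩ : ∃ j', j = j' + 1 := ⟨j - 1, by omega⟩
    have hpar' : Even i ↔ Even j' := by
      simp only [Nat.even_add_one] at hpar
      tauto
    have heq' : pwalk f g v1 i = pwalk f g v2 j' := by
      rcases Nat.even_or_odd i with h | h
      · have h2 : Even j' := hpar'.mp h
        have := heq
        rw [pwalk_succ_even f g v1 h, pwalk_succ_even f g v2 h2] at this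
        exact hg.injective this
      · have h2 : Odd j' := by
          rcases Nat.even_or_odd j' with hh | hh
          · exact absurd (hpar'.mpr hh) (Nat.not_even_iff_odd.mpr h)
          · exact hh
        have := heq
        rw [pwalk_succ_odd f g v1 h, pwalk_succ_odd f g v2 h2] at this
        exact hf.injective this
    have := IH (v1 := v1) (v2 := v2) j' hpar' (by omega) heq'
    rw [show j' - i = j' + 1 - (i+1) by omega] at this
    exact this

include hf hg in
/-- two walks from `f`-fixed starting points meeting at even positions coincide -/
lemma pwalk_cross {v1 v2 : V} (h1 : f v1 = v1)
    {i j : ℕ} (hij : i ≤ j) (hi : Even i) (hj : Even j)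
    (hjm : j ≤ mstop f g v2)
    (heq : pwalk f g v1 i = pwalk f g v2 j) :
    v1 = v2 ∧ i = j := by
  have hl := pwalk_back hf hg i j (iff_of_true hi hj) hij heq
  have hleven : Even (j - i) := (Nat.even_sub hij).mpr (iff_of_true hj hi)
  rcases Nat.eq_zero_or_pos (j - i) with h0 | hpos
  · rw [h0, pwalk_zero] at hl
    exact ⟨hl, by omega⟩
  · exfalso
    obtain ⟨l', hl'⟩ : ∃ l', j - i = l' + 1 := ⟨j - i - 1, by omega⟩
    rw [hl'] at hl hleven
    have hodd : Odd l' := by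
      rcases Nat.even_or_odd l' with hh | hh
      · exact absurd hleven (by simpa [Nat.even_add_one, Nat.not_even_iff_odd] using hh)
      · exact hh
    have hstep : pwalk f g v2 (l' + 1) = f (pwalk f g v2 l') := pwalk_succ_odd f g v2 hodd
    have hne : pwalk f g v2 (l' + 1) ≠ pwalk f g v2 l' := mstop_min (by omega)
    have h5 : f (pwalk f g v2 (l' + 1)) = pwalk f g v2 l' := by
      rw [hstep, hf _]
    have h4 : f (pwalk f g v2 (l' + 1)) = pwalk f g v2 (l' + 1) := by
      rw [← hl]; exact h1
    exact hne (h4.symm.trans h5)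
end

open Classical in
lemma matching_partner {V : Type*} [Fintype V] (G : SimpleGraph V) (M : Finset (Sym2 V))
    (hM : IsMatchingSet G M) :
    ∃ f : V → V, Function.Involutive f ∧ (∀ v u, s(v,u) ∈ M → f v = u) ∧
      (∀ v, f v ≠ v → s(v, f v) ∈ M) ∧ (∀ v, f v = v ↔ Unmatched M v) ∧
      2 * M.card = (Finset.univ.filter fun v => f v ≠ v).card := by
  classical
  set f : V → V := fun v => if h : ∃ u, s(v, u) ∈ M then h.choose else v with hfdef
  have hNe : ∀ v u, s(v,u) ∈ M → u ≠ v := by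
    intro v u hu hvu
    have h2 := hM.1 _ hu
    rw [SimpleGraph.mem_edgeSet] at h2
    exact h2.ne (hvu.symm)
  have hA : ∀ v u, s(v,u) ∈ M → f v = u := by
    intro v u hu
    have h : ∃ u, s(v, u) ∈ M := ⟨u, hu⟩
    have hspec := h.choose_spec
    have h3 : f v = h.choose := by simp only [hfdef, dif_pos h]
    rw [h3]
    by_contra hne
    have hne' : s(v, h.choose) ≠ s(v, u) := fun hh => hne (Sym2.congr_right.mp hh)
    exact hM.2 _ hspec _ hu hne' v ⟨Sym2.mem_mk_left .., Sym2.mem_mk_left ..⟩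
  have hB : ∀ v, f v ≠ v → s(v, f v) ∈ M := by
    intro v hv
    by_cases h : ∃ u, s(v, u) ∈ M
    · have h3 : f v = h.choose := by simp only [hfdef, dif_pos h]
      rw [h3]; exact h.choose_spec
    · exfalso; apply hv; simp only [hfdef, dif_neg h]
  have hC : ∀ v, f v = v ↔ Unmatched M v := by
    intro v
    constructor
    · intro hv e he hve
      rw [Sym2.mem_iff_exists] at hve
      obtain ⟨u, rfl⟩ := hve
      have := hA v u he
      exact hNe v u he (by rw [← this, hv])
    · intro hv
      by_contra hne
      exact hv _ (hB v hne) (Sym2.mem_mk_left ..)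
  have hInv : Function.Involutive f := by
    intro v
    by_cases hv : f v = v
    · rw [hv, hv]
    · have h1 : s(v, f v) ∈ M := hB v hv
      have h2 : s(f v, v) ∈ M := by rwa [Sym2.eq_swap] at h1
      exact hA (f v) v h2
  refine ⟨f, hInv, hA, hB, hC, ?_⟩
  have hmap : ∀ v ∈ Finset.univ.filter (fun v => f v ≠ v), s(v, f v) ∈ M := by
    intro v hv
    rw [Finset.mem_filter] at hv
    exact hB v hv.2
  rw [Finset.card_eq_sum_card_fiberwise hmap]
  rw [Finset.sum_congr rfl (g := fun _ => 2), Finset.sum_const, smul_eq_mul, mul_comm]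
  intro e he
  induction e using Sym2.ind with
  | _ a b =>
    have hab : b ≠ a := hNe a b he
    have hfa : f a = b := hA a b he
    have hfb : f b = a := hA b a (by rwa [Sym2.eq_swap] at he)
    have : (Finset.univ.filter fun v => f v ≠ v).filter (fun v => s(v, f v) = s(a,b))
        = {a, b} := by
      ext v
      simp only [Finset.mem_filter, Finset.mem_univ, true_and, Finset.mem_insert,
        Finset.mem_singleton]
      constructor
      · rintro ⟨hne, hev⟩
        rcases Sym2.eq_iff.mp hev with ⟨h1, h2⟩ | ⟨h1, h2⟩
        · left; exact h1
        · right; exact h1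
      · rintro (rfl | rfl)
        · exact ⟨by rw [hfa]; exact hab, by rw [hfa]⟩
        · exact ⟨by rw [hfb]; exact fun hh => hab hh.symm, by rw [hfb, Sym2.eq_swap]⟩
    rw [this, Finset.card_insert_of_notMem (by simpa using fun h => hab h.symm),
      Finset.card_singleton]

/-- If at most `(ε/2)|V(G)|` vertices of a finite graph `G` are starting points of
augmenting paths of length `< T` for a matching `M`, then any matching `M'` of `G`
satisfies `|M'|/|V| ≤ |M|/|V| + 1/T + ε/2`; in particular this bounds the maximum
matching. -/
theorem stmt16 {V : Type*} [Fintype V] (G : SimpleGraph V) (M : Finset (Sym2 V))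
    (hM : IsMatchingSet G M) (T : ℕ) (hT : 1 ≤ T) (ε : ℝ) (hε : 0 < ε)
    (hfew : (({x : V | ∃ m < T, ∃ w : ℕ → V, IsAugPath G M m w ∧ w 0 = x}).ncard : ℝ)
      ≤ ε / 2 * (Fintype.card V : ℝ)) :
    ∀ M' : Finset (Sym2 V), IsMatchingSet G M' →
      (M'.card : ℝ) / (Fintype.card V : ℝ)
        ≤ (M.card : ℝ) / (Fintype.card V : ℝ) + 1 / (T : ℝ) + ε / 2 := by
  classical
  intro M' hM'
  have hT' : (0:ℝ) < T := by exact_mod_cast hT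
  rcases Nat.eq_zero_or_pos (Fintype.card V) with hn0 | hnpos
  · rw [hn0]
    push_cast
    rw [div_zero, div_zero]
    have : (0:ℝ) ≤ 1 / T := by positivity
    linarith
  have hn' : (0:ℝ) < Fintype.card V := by exact_mod_cast hnpos
  obtain ⟨f, hfInv, hfA, hfB, hfC, hfcard⟩ := matching_partner G M hM
  obtain ⟨g, hgInv, hgA, hgB, hgC, hgcard⟩ := matching_partner G M' hM'
  set S : Set V := {x : V | ∃ m < T, ∃ w : ℕ → V, IsAugPath G M m w ∧ w 0 = x} with hS
  set Af := Finset.univ.filter (fun v => f v ≠ v) with hAf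
  set Ag := Finset.univ.filter (fun v => g v ≠ v) with hAg
  set A' := Ag \ Af with hA'
  set Aa := Af \ Ag with hAa
  -- basic facts about members of A'
  have hmemA' : ∀ v ∈ A', f v = v ∧ g v ≠ v := by
    intro v hv
    rw [hA', Finset.mem_sdiff, hAg, hAf, Finset.mem_filter] at hv
    refine ⟨?_, hv.1.2⟩
    by_contra h
    exact hv.2 (by rw [Finset.mem_filter]; exact ⟨Finset.mem_univ v, h⟩)
  -- the augmenting-path property for odd stopping time
  have haug : ∀ v : V, f v = v → g v ≠ v → Odd (mstop f g v) →
      IsAugPath G M (mstop f g v) (pwalk f g v) := by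
    intro v hfv hgv hodd
    set m := mstop f g v with hm
    have hstall := mstop_stall hfInv hgInv hfv (g := g)
    have hinj := mstop_inj hfInv hgInv hfv (g := g)
    have hmin : ∀ i < m, pwalk f g v (i+1) ≠ pwalk f g v i := fun i hi => mstop_min hi
    -- edge facts
    have hedgeM : ∀ i < m, Odd i → s(pwalk f g v i, pwalk f g v (i+1)) ∈ M := by
      intro i hi hoi
      rw [pwalk_succ_odd f g v hoi]
      exact hfB _ (fun h => hmin i hi (by rw [pwalk_succ_odd f g v hoi, h]))
    have hedgeM' : ∀ i < m, Even i → s(pwalk f g v i, pwalk f g v (i+1)) ∈ M' := by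
      intro i hi hei
      rw [pwalk_succ_even f g v hei]
      exact hgB _ (fun h => hmin i hi (by rw [pwalk_succ_even f g v hei, h]))
    have hnotM : ∀ i < m, Even i → s(pwalk f g v i, pwalk f g v (i+1)) ∉ M := by
      intro i hi hei hmem
      have hfi : f (pwalk f g v i) = pwalk f g v (i+1) := hfA _ _ hmem
      rcases Nat.eq_zero_or_pos i with rfl | hi1
      · rw [pwalk_zero, hfv, ← pwalk_zero f g v] at hfi
        exact hmin 0 hi hfi.symm
      · have hoi : Odd (i-1) := by
          rcases hei with ⟨t, ht⟩
          exact ⟨t - 1, by omega⟩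
        have hstep : pwalk f g v i = f (pwalk f g v (i-1)) := by
          have := pwalk_succ_odd f g v hoi
          rw [show (i-1)+1 = i by omega] at this
          exact this
        have : pwalk f g v (i-1) = pwalk f g v (i+1) := by
          rw [← hfi, hstep, hfInv _]
        have := hinj (i-1) (by omega) (i+1) (by omega) this
        omega
    refine ⟨hodd, hinj, ?_, ?_, ?_, ?_⟩
    · intro i hi
      rw [← SimpleGraph.mem_edgeSet]
      rcases Nat.even_or_odd i with hei | hoi
      · exact hM'.1 _ (hedgeM' i hi hei)
      · exact hM.1 _ (hedgeM i hi hoi)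
    · intro i hi
      constructor
      · intro hmem
        rcases Nat.even_or_odd i with hei | hoi
        · exact absurd hmem (hnotM i hi hei)
        · exact hoi
      · exact hedgeM i hi
    · rw [pwalk_zero]
      exact (hfC v).mp hfv
    · apply (hfC _).mp
      have := hstall
      rw [pwalk_succ_odd f g v hodd] at this
      exact this
  -- partition of A'
  set P3 := A'.filter (fun v => ¬ Odd (mstop f g v)) with hP3def
  set Q := A'.filter (fun v => Odd (mstop f g v)) with hQdef
  set P1 := Q.filter (fun v => mstop f g v < T) with hP1def
  set P2 := Q.filter (fun v => ¬ mstop f g v < T) with hP2def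
  have hsplit : A'.card = P1.card + P2.card + P3.card := by
    have a := Finset.card_filter_add_card_filter_not
      (s := A') (p := fun v => Odd (mstop f g v))
    have b := Finset.card_filter_add_card_filter_not
      (s := Q) (p := fun v => mstop f g v < T)
    rw [← hQdef, ← hP3def] at a
    rw [← hP1def, ← hP2def] at b
    omega
  -- counting identity
  have hkey : 2 * M'.card + Aa.card = 2 * M.card + A'.card := by
    have h1 : Aa.card + Ag.card = (Af ∪ Ag).card := Finset.card_sdiff_add_card Af Ag
    have h2 : A'.card + Af.card = (Af ∪ Ag).card := by
      rw [Finset.union_comm]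
      exact Finset.card_sdiff_add_card Ag Af
    omega
  -- P3 ↪ Aa
  have hP3 : P3.card ≤ Aa.card := by
    apply Finset.card_le_card_of_injOn (fun v => pwalk f g v (mstop f g v))
    · intro v hv
      simp only [Finset.mem_coe, hP3def, Finset.mem_filter] at hv
      obtain ⟨hfv, hgv⟩ := hmemA' v hv.1
      have heven : Even (mstop f g v) := Nat.not_odd_iff_even.mp hv.2
      have hpos := mstop_pos hfInv hgInv hfv hgv
      have hstall := mstop_stall hfInv hgInv hfv (g := g)
      have hgoal2 : g (pwalk f g v (mstop f g v)) = pwalk f g v (mstop f g v) := by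
        have := hstall
        rw [pwalk_succ_even f g v heven] at this
        exact this
      have hgoal1 : f (pwalk f g v (mstop f g v)) ≠ pwalk f g v (mstop f g v) := by
        -- f (end) ≠ end
        have hoi : Odd (mstop f g v - 1) := by
          rcases heven with ⟨t, ht⟩
          exact ⟨t - 1, by omega⟩
        have hstep : pwalk f g v (mstop f g v) = f (pwalk f g v (mstop f g v - 1)) := by
          have := pwalk_succ_odd f g v hoi
          rw [show (mstop f g v - 1)+1 = mstop f g v by omega] at this
          exact this
        intro h
        have : pwalk f g v (mstop f g v) = pwalk f g v (mstop f g v - 1) := by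
          rw [← h]
          conv_lhs => rw [hstep]
          rw [hfInv _]
        have h2 := mstop_min (f := f) (g := g) (v := v) (i := mstop f g v - 1) (by omega)
        rw [show (mstop f g v - 1)+1 = mstop f g v by omega] at h2
        exact h2 this
      rw [Finset.mem_coe, hAa, Finset.mem_sdiff]
      constructor
      · rw [hAf, Finset.mem_filter]
        exact ⟨Finset.mem_univ _, hgoal1⟩
      · rw [hAg, Finset.mem_filter]
        intro h
        exact h.2 hgoal2
    · intro v1 h1 v2 h2 heq
      rw [Finset.mem_coe, hP3def, Finset.mem_filter] at h1 h2
      obtain ⟨hfv1, hgv1⟩ := hmemA' v1 h1.1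
      obtain ⟨hfv2, hgv2⟩ := hmemA' v2 h2.1
      have he1 : Even (mstop f g v1) := Nat.not_odd_iff_even.mp h1.2
      have he2 : Even (mstop f g v2) := Nat.not_odd_iff_even.mp h2.2
      rcases le_total (mstop f g v1) (mstop f g v2) with hle | hle
      · exact (pwalk_cross hfInv hgInv hfv1 hle he1 he2 le_rfl heq).1
      · exact (pwalk_cross hfInv hgInv hfv2 hle he2 he1 le_rfl heq.symm).1.symm
  -- P1 ⊆ S
  have hP1S : (P1 : Set V) ⊆ S := by
    intro v hv
    rw [Finset.mem_coe, hP1def, Finset.mem_filter, hQdef, Finset.mem_filter] at hv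
    obtain ⟨⟨hvA', hodd⟩, hlt⟩ := hv
    obtain ⟨hfv, hgv⟩ := hmemA' v hvA'
    exact ⟨mstop f g v, hlt, pwalk f g v, haug v hfv hgv hodd, pwalk_zero f g v⟩
  have hP1 : (P1.card : ℝ) ≤ ε / 2 * (Fintype.card V : ℝ) := by
    refine le_trans ?_ hfew
    have : P1.card ≤ S.ncard := by
      rw [← Set.ncard_coe_finset]
      exact Set.ncard_le_ncard hP1S (Set.toFinite S)
    exact_mod_cast this
  -- P2 counting
  set K := T / 2 + 1 with hK
  have hP2K : P2.card * K ≤ Fintype.card V := by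
    have hcard : (P2 ×ˢ Finset.range K).card ≤ Finset.univ.card (α := V) := by
      apply Finset.card_le_card_of_injOn (fun p => pwalk f g p.1 (2 * p.2))
      · intro p _; exact Finset.mem_univ _
      · intro p hp q hq heq
        rw [Finset.mem_coe, Finset.mem_product, Finset.mem_range] at hp hq
        have hpm : ¬ mstop f g p.1 < T := by
          have := hp.1; rw [hP2def, Finset.mem_filter] at this; exact this.2
        have hqm : ¬ mstop f g q.1 < T := by
          have := hq.1; rw [hP2def, Finset.mem_filter] at this; exact this.2
        have hpA : p.1 ∈ A' := by
          have := hp.1; rw [hP2def, Finset.mem_filter, hQdef, Finset.mem_filter] at this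
          exact this.1.1
        have hqA : q.1 ∈ A' := by
          have := hq.1; rw [hP2def, Finset.mem_filter, hQdef, Finset.mem_filter] at this
          exact this.1.1
        obtain ⟨hfp, hgp⟩ := hmemA' _ hpA
        obtain ⟨hfq, hgq⟩ := hmemA' _ hqA
        have hple : 2 * p.2 ≤ mstop f g p.1 := by omega
        have hqle : 2 * q.2 ≤ mstop f g q.1 := by omega
        have hep : Even (2 * p.2) := ⟨p.2, by ring⟩
        have heq' : Even (2 * q.2) := ⟨q.2, by ring⟩
        rcases le_total (2 * p.2) (2 * q.2) with hle | hle
        · obtain ⟨hv, hi⟩ := pwalk_cross hfInv hgInv hfp hle hep heq' hqle heq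
          exact Prod.ext hv (by omega)
        · obtain ⟨hv, hi⟩ := pwalk_cross hfInv hgInv hfq hle heq' hep hple heq.symm
          exact Prod.ext hv.symm (by omega)
    rw [Finset.card_product, Finset.card_range, Finset.card_univ] at hcard
    exact hcard
  have hP2nat : P2.card * (T + 1) ≤ 2 * Fintype.card V := by
    have h1 : P2.card * (T + 1) ≤ P2.card * (2 * K) :=
      Nat.mul_le_mul_left _ (by omega)
    have h2 : P2.card * (2 * K) = 2 * (P2.card * K) := by ring
    omega
  have hP2 : (P2.card : ℝ) * (T : ℝ) ≤ 2 * (Fintype.card V : ℝ) := by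
    have h1 : (P2.card : ℝ) * ((T : ℝ) + 1) ≤ 2 * (Fintype.card V : ℝ) := by
      exact_mod_cast hP2nat
    nlinarith [Nat.cast_nonneg (α := ℝ) P2.card]
  have hP2' : (P2.card : ℝ) ≤ 2 * (Fintype.card V : ℝ) / (T : ℝ) := by
    rw [le_div_iff₀ hT']
    exact hP2
  -- assemble
  have hfinal : (M'.card : ℝ) ≤ (M.card : ℝ) + (Fintype.card V : ℝ) * (1 / T)
      + (Fintype.card V : ℝ) * (ε / 2) := by
    have e1 : 2 * M'.card ≤ 2 * M.card + P1.card + P2.card := by omega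
    have e1' : 2 * (M'.card : ℝ) ≤ 2 * (M.card : ℝ) + (P1.card : ℝ) + (P2.card : ℝ) := by
      exact_mod_cast e1
    have hdiv : (Fintype.card V : ℝ) * (1 / T) = (Fintype.card V : ℝ) / T := by ring
    have h2T : 2 * (Fintype.card V : ℝ) / (T : ℝ) = 2 * ((Fintype.card V : ℝ) / T) := by ring
    rw [h2T] at hP2'
    linarith
  calc (M'.card : ℝ) / (Fintype.card V : ℝ)
      ≤ ((M.card : ℝ) + (Fintype.card V : ℝ) * (1 / T)
          + (Fintype.card V : ℝ) * (ε / 2)) / (Fintype.card V : ℝ) := by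
        gcongr
    _ = (M.card : ℝ) / (Fintype.card V : ℝ) + 1 / (T : ℝ) + ε / 2 := by
        field_simp
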